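/- Let Z be an n×k real matrix with Z^T Z positive definite, P_A an orthogonal projection matrix, and Y ∈ ℝ^n. For any κ < 1, the vector α̂ = (Z^T(I - κ P_A^⊥)Z)^{-1} Z^T(I - κ P_A^⊥)Y, where P_A^⊥ = I - P_A, is the unique minimizer over α ∈ ℝ^k of the function α ↦ (1-κ)‖Y - Zα‖² + κ‖P_A(Y - Zα)‖². -/

import Mathlib

open Matrix

/-- The K-class estimator `(Zᵀ(I - κ P_A^⊥)Z)⁻¹ Zᵀ(I - κ P_A^⊥) Y`, with
`P_A^⊥ = I - P_A`, is the unique minimizer of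
`α ↦ (1-κ)‖Y - Zα‖² + κ‖P_A(Y - Zα)‖²` for `κ < 1`. -/
theorem kclass_estimator_unique_minimizer {n k : ℕ} (Z : Matrix (Fin n) (Fin k) ℝ)
    (Y : Fin n → ℝ) (PA : Matrix (Fin n) (Fin n) ℝ)
    (hPsymm : PAᵀ = PA) (hPidem : PA * PA = PA)
    (hZ : (Zᵀ * Z).PosDef) (κ : ℝ) (hκ : κ < 1) :
    let f : (Fin k → ℝ) → ℝ := fun α =>
      (1 - κ) * ((Y - Z.mulVec α) ⬝ᵥ (Y - Z.mulVec α)) +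
        κ * ((PA.mulVec (Y - Z.mulVec α)) ⬝ᵥ (PA.mulVec (Y - Z.mulVec α)))
    let αhat : Fin k → ℝ := ((Zᵀ * (1 - κ • (1 - PA)) * Z)⁻¹).mulVec
      ((Zᵀ * (1 - κ • (1 - PA))).mulVec Y)
    (∀ α, f αhat ≤ f α) ∧ (∀ α, α ≠ αhat → f αhat < f α) := by
  intro f αhat
  set M : Matrix (Fin n) (Fin n) ℝ := 1 - κ • (1 - PA) with hM
  set B : Matrix (Fin k) (Fin k) ℝ := Zᵀ * M * Z with hB
  have hMsymm : Mᵀ = M := by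
    simp [hM, transpose_sub, transpose_smul, hPsymm]
  -- generic symmetric-matrix dot product swap
  have hswap : ∀ (v w : Fin n → ℝ), v ⬝ᵥ M *ᵥ w = w ⬝ᵥ M *ᵥ v := by
    intro v w
    rw [dotProduct_mulVec, ← mulVec_transpose, hMsymm, dotProduct_comm]
  -- v ⬝ PA v = PA v ⬝ PA v
  have hPq : ∀ v : Fin n → ℝ, v ⬝ᵥ PA *ᵥ v = (PA *ᵥ v) ⬝ᵥ (PA *ᵥ v) := by
    intro v
    conv_rhs => rw [dotProduct_mulVec, ← mulVec_transpose, hPsymm, mulVec_mulVec, hPidem,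
      dotProduct_comm]
  -- quadratic form of M
  have hMq : ∀ v : Fin n → ℝ, v ⬝ᵥ M *ᵥ v
      = (1 - κ) * (v ⬝ᵥ v) + κ * ((PA *ᵥ v) ⬝ᵥ (PA *ᵥ v)) := by
    intro v
    rw [hM]
    simp only [sub_mulVec, one_mulVec, smul_mulVec, dotProduct_sub, dotProduct_smul,
      smul_eq_mul]
    rw [hPq]
    ring
  -- f in terms of M
  have hf : ∀ α, f α = (Y - Z *ᵥ α) ⬝ᵥ M *ᵥ (Y - Z *ᵥ α) := by
    intro α; rw [hMq]
  -- positivity of M's quadratic form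
  have hMpos : ∀ v : Fin n → ℝ, v ≠ 0 → 0 < v ⬝ᵥ M *ᵥ v := by
    intro v hv
    have key : v ⬝ᵥ M *ᵥ v = (PA *ᵥ v) ⬝ᵥ (PA *ᵥ v)
        + (1 - κ) * ((v - PA *ᵥ v) ⬝ᵥ (v - PA *ᵥ v)) := by
      rw [hMq]
      have h1 : (v - PA *ᵥ v) ⬝ᵥ (v - PA *ᵥ v)
          = v ⬝ᵥ v - (PA *ᵥ v) ⬝ᵥ (PA *ᵥ v) := by
        simp only [dotProduct_sub, sub_dotProduct]
        rw [← hPq v, dotProduct_comm (PA *ᵥ v) v]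
        ring
      rw [h1]; ring
    rw [key]
    have hnn : ∀ x : Fin n → ℝ, (0:ℝ) ≤ x ⬝ᵥ x :=
      fun x => Finset.sum_nonneg fun i _ => mul_self_nonneg (x i)
    have h2 : (0:ℝ) ≤ (PA *ᵥ v) ⬝ᵥ (PA *ᵥ v) := hnn _
    have h3 : (0:ℝ) ≤ (v - PA *ᵥ v) ⬝ᵥ (v - PA *ᵥ v) := hnn _
    rcases lt_or_eq_of_le h2 with h2' | h2'
    · nlinarith
    rcases lt_or_eq_of_le h3 with h3' | h3'
    · nlinarith
    exfalso
    have hp0 : PA *ᵥ v = 0 := by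
      have := (dotProduct_self_eq_zero (v := PA *ᵥ v)).mp h2'.symm
      exact this
    have hd0 : v - PA *ᵥ v = 0 := (dotProduct_self_eq_zero).mp h3'.symm
    apply hv
    have := sub_eq_zero.mp hd0
    rw [this, hp0]
  -- pull Zᵀ across dot products
  have hZt : ∀ (e : Fin k → ℝ) (w : Fin n → ℝ), e ⬝ᵥ Zᵀ *ᵥ w = (Z *ᵥ e) ⬝ᵥ w := by
    intro e w
    rw [dotProduct_mulVec, ← mulVec_transpose, transpose_transpose]
  -- quadratic form of B
  have hBq : ∀ e : Fin k → ℝ, e ⬝ᵥ B *ᵥ e = (Z *ᵥ e) ⬝ᵥ M *ᵥ (Z *ᵥ e) := by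
    intro e
    rw [hB, Matrix.mul_assoc, ← mulVec_mulVec, hZt, mulVec_mulVec, ← mulVec_mulVec]
  have hBpos : ∀ e : Fin k → ℝ, e ≠ 0 → 0 < e ⬝ᵥ B *ᵥ e := by
    intro e he
    rw [hBq]
    apply hMpos
    intro hZe
    have h0 : e ⬝ᵥ (Zᵀ * Z) *ᵥ e = 0 := by
      rw [← mulVec_mulVec, hZt, hZe, dotProduct_zero]
    have := hZ.dotProduct_mulVec_pos he
    simp only [star_trivial] at this
    rw [h0] at this
    exact lt_irrefl 0 this
  -- B is positive definite (mathlib sense)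
  have hBsymm : Bᵀ = B := by
    rw [hB, transpose_mul, transpose_mul, transpose_transpose, hMsymm, Matrix.mul_assoc]
  have hBpd : B.PosDef := by
    refine Matrix.PosDef.of_dotProduct_mulVec_pos ?_ (fun x hx => by simpa using hBpos x hx)
    rw [Matrix.IsHermitian, conjTranspose_eq_transpose_of_trivial, hBsymm]
  have hBdet : IsUnit B.det := hBpd.det_pos.ne'.isUnit
  -- normal equations: B *ᵥ αhat = (Zᵀ * M) *ᵥ Y
  have hnormal : B *ᵥ αhat = (Zᵀ * M) *ᵥ Y := by
    show B *ᵥ (B⁻¹ *ᵥ ((Zᵀ * M) *ᵥ Y)) = (Zᵀ * M) *ᵥ Y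
    rw [mulVec_mulVec, Matrix.mul_nonsing_inv B hBdet, one_mulVec]
  set u : Fin n → ℝ := Y - Z *ᵥ αhat with hu
  -- orthogonality
  have hkey : Zᵀ *ᵥ (M *ᵥ u) = 0 := by
    rw [mulVec_mulVec, hu, mulVec_sub, mulVec_mulVec, ← hB, hnormal, sub_self]
  have horth : ∀ e : Fin k → ℝ, (Z *ᵥ e) ⬝ᵥ M *ᵥ u = 0 := by
    intro e
    rw [← hZt, hkey, dotProduct_zero]
  -- main expansion: f α = f αhat + e ⬝ᵥ B *ᵥ e
  have hexp : ∀ α : Fin k → ℝ, f α = f αhat + (α - αhat) ⬝ᵥ B *ᵥ (α - αhat) := by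
    intro α
    have hr : Y - Z *ᵥ α = u - Z *ᵥ (α - αhat) := by
      rw [hu, mulVec_sub]; abel
    have expand : ∀ x y : Fin n → ℝ, (x - y) ⬝ᵥ M *ᵥ (x - y)
        = x ⬝ᵥ M *ᵥ x - y ⬝ᵥ M *ᵥ x - x ⬝ᵥ M *ᵥ y + y ⬝ᵥ M *ᵥ y := by
      intro x y
      rw [mulVec_sub, dotProduct_sub, sub_dotProduct, sub_dotProduct]
      ring
    have h1 : (Z *ᵥ (α - αhat)) ⬝ᵥ M *ᵥ u = 0 := horth _
    have h2 : u ⬝ᵥ M *ᵥ (Z *ᵥ (α - αhat)) = 0 := by rw [hswap]; exact h1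
    rw [hf α, hf αhat, hr, hBq, expand u (Z *ᵥ (α - αhat)), h1, h2, ← hu]
    ring
  constructor
  · intro α
    rw [hexp α]
    rcases eq_or_ne α αhat with rfl | hne
    · simp
    · have := hBpos (α - αhat) (sub_ne_zero.mpr hne)
      linarith
  · intro α hne
    rw [hexp α]
    have := hBpos (α - αhat) (sub_ne_zero.mpr hne)
    linarith
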